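/- Let f₁,…,f_N : ℝⁿ → ℝ be functions differentiable at x, and let f(y) = minᵢ fᵢ(y). Then for every direction v ∈ ℝⁿ, the one-sided directional derivative of f at x in direction v exists and equals min{∇fᵢ(x)ᵀv : i such that fᵢ(x) = f(x)}. -/

import Mathlib

open Filter Finset Topology

theorem directional_derivative_of_finite_min
    {N nn : ℕ} [NeZero N]
    (fi : Fin N → EuclideanSpace ℝ (Fin nn) → ℝ)
    (D : Fin N → (EuclideanSpace ℝ (Fin nn) →L[ℝ] ℝ))
    (x : EuclideanSpace ℝ (Fin nn))
    (hD : ∀ i, HasFDerivAt (fi i) (D i) x)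
    (f : EuclideanSpace ℝ (Fin nn) → ℝ) (hf : f = fun y => ⨅ i, fi i y)
    (v : EuclideanSpace ℝ (Fin nn)) :
    Filter.Tendsto (fun t : ℝ => (f (x + t • v) - f x) / t)
      (nhdsWithin 0 (Set.Ioi 0))
      (nhds (sInf {r : ℝ | ∃ i, fi i x = f x ∧ r = D i v})) := by
  have hNe : Nonempty (Fin N) := ⟨⟨0, Nat.pos_of_ne_zero (NeZero.ne N)⟩⟩
  have hfin : ∀ y, f y = Finset.univ.inf' Finset.univ_nonempty (fun i => fi i y) := by
    intro y
    rw [hf, Finset.inf'_univ_eq_ciInf]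
  have hfle : ∀ i y, f y ≤ fi i y := by
    intro i y
    rw [hfin y]
    exact Finset.inf'_le _ (Finset.mem_univ i)
  set S : Finset (Fin N) := Finset.univ.filter (fun i => fi i x = f x) with hSdef
  have hmemS : ∀ i, i ∈ S ↔ fi i x = f x := by intro i; simp [hSdef]
  have hS : S.Nonempty := by
    obtain ⟨i, -, hi⟩ := Finset.exists_mem_eq_inf' (Finset.univ_nonempty (α := Fin N))
      (fun i => fi i x)
    exact ⟨i, (hmemS i).2 ((hfin x).trans hi).symm⟩
  have htarget : sInf {r : ℝ | ∃ i, fi i x = f x ∧ r = D i v}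
      = S.inf' hS (fun i => D i v) := by
    rw [Finset.inf'_eq_csInf_image]
    congr 1
    ext r
    constructor
    · rintro ⟨i, hi, rfl⟩
      exact ⟨i, (hmemS i).2 hi, rfl⟩
    · rintro ⟨i, hi, rfl⟩
      exact ⟨i, (hmemS i).1 hi, rfl⟩
  rw [htarget]
  have hDx : ∀ i, HasFDerivAt (fi i) (D i) (x + (0:ℝ) • v) := by
    intro i; simpa using hD i
  have hquot : ∀ i, Tendsto (fun t : ℝ => (fi i (x + t • v) - fi i x) / t)
      (𝓝[>] (0:ℝ)) (𝓝 (D i v)) := by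
    intro i
    have hline : HasDerivAt (fun t : ℝ => x + t • v) v 0 := by
      simpa using ((hasDerivAt_id (0:ℝ)).smul_const v).const_add x
    have hcomp : HasDerivAt (fun t : ℝ => fi i (x + t • v)) (D i v) 0 :=
      (hDx i).comp_hasDerivAt 0 hline
    have h1 := hasDerivAt_iff_tendsto_slope.1 hcomp
    have h2 := h1.mono_left (nhdsWithin_mono _ (fun t ht => ne_of_gt (Set.mem_Ioi.1 ht)))
    refine h2.congr (fun t => ?_)
    simp only [slope_def_field]
    simp [div_eq_inv_mul]
  have hlim : Tendsto (fun t : ℝ => S.inf' hS (fun i => (fi i (x + t • v) - fi i x) / t))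
      (𝓝[>] (0:ℝ)) (𝓝 (S.inf' hS (fun i => D i v))) :=
    Filter.Tendsto.finset_inf'_nhds_apply hS (fun i _ => hquot i)
  refine Tendsto.congr' ?_ hlim
  obtain ⟨j0, hj0⟩ := hS
  have hcont : ∀ i, Tendsto (fun t : ℝ => fi i (x + t • v)) (𝓝[>] (0:ℝ)) (𝓝 (fi i x)) := by
    intro i
    have hin : Tendsto (fun t : ℝ => x + t • v) (𝓝 0) (𝓝 x) := by
      have hc : Continuous (fun t : ℝ => x + t • v) := by fun_prop
      simpa using hc.tendsto 0
    exact ((hD i).continuousAt.tendsto.comp hin).mono_left nhdsWithin_le_nhds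
  have hev : ∀ᶠ t in 𝓝[>] (0:ℝ), ∀ i ∉ S, fi j0 (x + t • v) < fi i (x + t • v) := by
    have : ∀ᶠ t in 𝓝[>] (0:ℝ), ∀ i ∈ Finset.univ.filter (fun i => i ∉ S),
        fi j0 (x + t • v) < fi i (x + t • v) := by
      rw [Filter.eventually_all_finset]
      intro i hi
      have hiS : i ∉ S := (Finset.mem_filter.1 hi).2
      have hlt : fi j0 x < fi i x := by
        have h1 : fi j0 x = f x := (hmemS j0).1 hj0
        have h2 : f x ≤ fi i x := hfle i x
        have h3 : fi i x ≠ f x := fun h => hiS ((hmemS i).2 h)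
        rw [h1]
        exact lt_of_le_of_ne h2 (Ne.symm h3)
      exact (hcont j0).eventually_lt (hcont i) hlt
    filter_upwards [this] with t ht i hi
    exact ht i (by simpa using hi)
  filter_upwards [hev, self_mem_nhdsWithin] with t ht htpos
  have htpos' : (0:ℝ) < t := htpos
  symm
  -- f (x + t•v) equals inf' over S
  have hSinf : S.inf' ⟨j0, hj0⟩ (fun i => fi i (x + t • v)) = f (x + t • v) := by
    rw [hfin]
    apply le_antisymm
    · obtain ⟨i, hiu, hieq⟩ := Finset.exists_mem_eq_inf'
        (Finset.univ_nonempty (α := Fin N)) (fun i => fi i (x + t • v))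
      rw [hieq]
      by_cases hiS : i ∈ S
      · exact Finset.inf'_le _ hiS
      · exfalso
        have h1 : fi j0 (x + t • v) < fi i (x + t • v) := ht i hiS
        have h2 : Finset.univ.inf' Finset.univ_nonempty (fun i => fi i (x + t • v))
            ≤ fi j0 (x + t • v) := Finset.inf'_le _ (Finset.mem_univ j0)
        rw [hieq] at h2
        exact absurd h2 (not_le.2 h1)
    · obtain ⟨i, hiS, hieq⟩ := Finset.exists_mem_eq_inf' ⟨j0, hj0⟩
        (fun i => fi i (x + t • v))
      rw [hieq]
      exact Finset.inf'_le _ (Finset.mem_univ i)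
  -- now pull out the affine map
  have hg : ∀ a b : ℝ, (min a b - f x) / t = min ((a - f x)/t) ((b - f x)/t) := by
    intro a b
    rw [min_div_div_right htpos'.le, min_sub_sub_right]
  calc (f (x + t • v) - f x) / t
      = (S.inf' ⟨j0, hj0⟩ (fun i => fi i (x + t • v)) - f x) / t := by rw [hSinf]
    _ = S.inf' ⟨j0, hj0⟩ (fun i => (fi i (x + t • v) - f x) / t) := by
        exact Finset.apply_inf'_eq_inf'_comp ⟨j0, hj0⟩ (fun y => (y - f x)/t) hg
    _ = S.inf' ⟨j0, hj0⟩ (fun i => (fi i (x + t • v) - fi i x) / t) := by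
        apply Finset.inf'_congr _ rfl
        intro i hiS
        rw [(hmemS i).1 hiS]
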